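/- Let n and d be positive integers and let F : F_{2^n} → F_{2^n} be defined by F(x) = x^{2^d − 1}. Then F is 0-APN if and only if gcd(d − 1, n) = 1. -/

import Mathlib

section Aux

variable {K : Type*} [Field K] [CharP K 2]

lemma my_pow_pow_inj (m : ℕ) : Function.Injective (fun x : K => x ^ (2:ℕ) ^ m) := by
  have : (fun x : K => x ^ (2:ℕ) ^ m) = (frobenius K 2)^[m] := by
    funext x; rw [iterate_frobenius]
  rw [this]
  exact Function.Injective.iterate (frobenius_inj K 2) m

omit [CharP K 2] in
lemma my_fixed_mul (w : K) (a : ℕ) (h : w ^ (2:ℕ) ^ a = w) (k : ℕ) :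
    w ^ (2:ℕ) ^ (a * k) = w := by
  induction k with
  | zero => simp
  | succ k ih =>
    have : (2:ℕ) ^ (a * (k+1)) = ((2:ℕ) ^ (a * k)) * 2 ^ a := by
      rw [← pow_add]; ring_nf
    rw [this, pow_mul, ih, h]

lemma my_fixed_gcd (w : K) : ∀ a b : ℕ, w ^ (2:ℕ) ^ a = w → w ^ (2:ℕ) ^ b = w →
    w ^ (2:ℕ) ^ (Nat.gcd a b) = w := by
  intro a
  induction a using Nat.strong_induction_on with
  | _ a ih =>
    intro b ha hb
    rcases Nat.eq_zero_or_pos a with rfl | hpos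
    · simpa using hb
    · rw [Nat.gcd_rec]
      apply ih (b % a) (Nat.mod_lt b hpos) a _ ha
      apply my_pow_pow_inj (a * (b / a))
      have keq : (2:ℕ) ^ (b % a + a * (b / a)) = 2 ^ b := by
        rw [Nat.mod_add_div]
      simp only
      rw [my_fixed_mul w a ha (b / a), ← pow_mul, ← pow_add, keq, hb]

lemma my_ident (d : ℕ) (u v : K) :
    u * v * (u + v) * (u ^ (2 ^ d - 1) + v ^ (2 ^ d - 1) + (u + v) ^ (2 ^ d - 1))
      = u ^ (2 ^ d) * v ^ 2 + u ^ 2 * v ^ (2 ^ d) := by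
  have h2 : (2 : K) = 0 := by exact_mod_cast CharP.cast_eq_zero K 2
  have he : (2:ℕ) ^ d = (2 ^ d - 1) + 1 :=
    (Nat.succ_pred_eq_of_pos (Nat.two_pow_pos d)).symm
  set e := (2:ℕ) ^ d - 1 with hedef
  have hfr : (u + v) ^ (2:ℕ) ^ d = u ^ (2:ℕ) ^ d + v ^ (2:ℕ) ^ d :=
    add_pow_char_pow u v 2 d
  rw [he] at hfr ⊢
  linear_combination u * v * hfr + (u ^ (e + 2) * v + u * v ^ (e + 2)) * h2

lemma my_sub_one_dvd {a b : ℕ} (h : a ∣ b) : (2:ℕ) ^ a - 1 ∣ 2 ^ b - 1 := by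
  obtain ⟨c, rfl⟩ := h
  rw [pow_mul]
  simpa using Nat.sub_dvd_pow_sub_pow ((2:ℕ) ^ a) 1 c

end Aux


open scoped Classical

noncomputable instance (n : ℕ) : Fintype (GaloisField 2 n) := Fintype.ofFinite _

/-- The absolute trace of `F_{2^n}` over `F_2`. -/
noncomputable def fieldTr (n : ℕ) (x : GaloisField 2 n) : ZMod 2 :=
  Algebra.trace (ZMod 2) (GaloisField 2 n) x

/-- `(-1)^{Tr(x)}` as an integer. -/
noncomputable def chi (n : ℕ) (x : GaloisField 2 n) : ℤ :=
  (-1) ^ (fieldTr n x).val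

/-- The Walsh transform `W_F(a,b)`. -/
noncomputable def walsh (n : ℕ) (F : GaloisField 2 n → GaloisField 2 n)
    (a b : GaloisField 2 n) : ℤ :=
  ∑ x : GaloisField 2 n, chi n (b * F x + a * x)

/-- `F` is almost perfect nonlinear. -/
def IsAPN (n : ℕ) (F : GaloisField 2 n → GaloisField 2 n) : Prop :=
  ∀ a b : GaloisField 2 n, a ≠ 0 →
    Nat.card {x : GaloisField 2 n // F (x + a) + F x = b} ≤ 2

/-- `F` is partially APN at the point `x₀`. -/
def IsPAPN (n : ℕ) (F : GaloisField 2 n → GaloisField 2 n) (x₀ : GaloisField 2 n) : Prop :=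
  ∀ u v : GaloisField 2 n, F x₀ + F u + F v + F (x₀ + u + v) = 0 →
    (x₀ + u) * (x₀ + v) * (u + v) = 0

/-- The `(x₀, ε)`-modification of `F`. -/
noncomputable
def pointModify (n : ℕ) (F : GaloisField 2 n → GaloisField 2 n) (x₀ ε : GaloisField 2 n) :
    GaloisField 2 n → GaloisField 2 n :=
  fun x => if x = x₀ then F x₀ + ε else F x

/-- `E_F(a,b) = (-1)^{Tr(a x₀ + b y₀)} (1 - (-1)^{Tr(b ε)})`. -/
noncomputable def EF (n : ℕ) (F : GaloisField 2 n → GaloisField 2 n)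
    (x₀ ε a b : GaloisField 2 n) : ℤ :=
  chi n (a * x₀ + b * F x₀) * (1 - chi n (b * ε))

theorem papn_of_two_pow_sub_one (n d : ℕ) (hn : 0 < n) (hd : 0 < d) :
    IsPAPN n (fun x : GaloisField 2 n => x ^ (2 ^ d - 1)) 0 ↔ Nat.gcd (d - 1) n = 1 := by
    classical
  set K := GaloisField 2 n with hK
  have hcard : Fintype.card K = 2 ^ n := by
    rw [← Nat.card_eq_fintype_card]
    exact GaloisField.card 2 n hn.ne'
  have hepos : (2:ℕ) ^ d - 1 ≠ 0 := by
    have : (2:ℕ) ^ d ≥ 2 ^ 1 := Nat.pow_le_pow_right (by norm_num) hd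
    omega
  constructor
  · -- IsPAPN → gcd = 1
    intro hP
    by_contra hg
    set g := Nat.gcd (d - 1) n with hgdef
    have hgpos : 0 < g := Nat.gcd_pos_of_pos_right _ hn
    have hg2 : 2 ≤ g := by omega
    -- construct a unit w of order 2^g - 1
    set N := (2:ℕ) ^ n - 1 with hNdef
    set m := (2:ℕ) ^ g - 1 with hmdef
    have hm2 : 2 ≤ m := by
      have : (2:ℕ) ^ 2 ≤ 2 ^ g := Nat.pow_le_pow_right (by norm_num) hg2
      omega
    have hNpos : 0 < N := by
      have : (2:ℕ) ^ 1 ≤ 2 ^ n := Nat.pow_le_pow_right (by norm_num) hn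
      omega
    have hmN : m ∣ N := my_sub_one_dvd (Nat.gcd_dvd_right (d - 1) n)
    obtain ⟨ζ, hζ⟩ := IsCyclic.exists_generator (α := Kˣ)
    have hord : orderOf ζ = N := by
      rw [orderOf_eq_card_of_forall_mem_zpowers hζ, Nat.card_eq_fintype_card,
        Fintype.card_units, hcard]
    set k := N / m with hkdef
    have hkm : k * m = N := Nat.div_mul_cancel hmN
    have hkpos : 0 < k := by
      rcases Nat.eq_zero_or_pos k with h0 | h
      · rw [h0, zero_mul] at hkm; omega
      · exact h
    have hkN : k < N := Nat.div_lt_self hNpos hm2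
    set w := ζ ^ k with hwdef
    have hw1 : w ≠ 1 := by
      intro h
      have := orderOf_dvd_of_pow_eq_one h
      rw [hord] at this
      have := Nat.le_of_dvd hkpos this
      omega
    have hwm : w ^ m = 1 := by
      rw [hwdef, ← pow_mul, hkm, ← hord, pow_orderOf_eq_one]
    -- pass to the field element x = ↑w
    set x : K := (w : K) with hxdef
    have hx0 : x ≠ 0 := Units.ne_zero w
    have hx1 : x ≠ 1 := by
      intro h
      exact hw1 (Units.ext h)
    have hxm : x ^ m = 1 := by
      rw [hxdef, ← Units.val_pow_eq_pow_val, hwm, Units.val_one]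
    -- x^(2^(d-1)) = x
    have hmd : m ∣ (2:ℕ) ^ (d - 1) - 1 := my_sub_one_dvd (Nat.gcd_dvd_left (d - 1) n)
    have hxd1 : x ^ ((2:ℕ) ^ (d - 1) - 1) = 1 := by
      obtain ⟨t, ht⟩ := hmd
      rw [ht, pow_mul, hxm, one_pow]
    have hxd : x ^ (2:ℕ) ^ (d - 1) = x := by
      have h1 : (2:ℕ) ^ (d - 1) = ((2:ℕ) ^ (d - 1) - 1) + 1 :=
        (Nat.succ_pred_eq_of_pos (Nat.two_pow_pos _)).symm
      rw [h1, pow_succ, hxd1, one_mul]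
    have hxdd : x ^ (2:ℕ) ^ d = x ^ 2 := by
      have h2 : (2:ℕ) ^ d = 2 ^ (d - 1) * 2 := by
        rw [← pow_succ]
        congr 1
        omega
      rw [h2, pow_mul, hxd]
    -- the sum vanishes
    have hx1' : (1 : K) + x ≠ 0 := by
      intro h
      apply hx1
      have := CharTwo.add_eq_iff_eq_add.mp h
      simpa using this.symm
    have hid := my_ident d (1 : K) x
    rw [hxdd] at hid
    simp only [one_pow, one_mul] at hid
    have hid' : x * (1 + x) * (1 + x ^ (2 ^ d - 1) + (1 + x) ^ (2 ^ d - 1)) = 0 := by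
      rw [hid, CharTwo.add_self_eq_zero]
    have hsum : (1 : K) + x ^ (2 ^ d - 1) + (1 + x) ^ (2 ^ d - 1) = 0 := by
      rcases mul_eq_zero.mp hid' with h | h
      · rcases mul_eq_zero.mp h with h | h
        · exact absurd h hx0
        · exact absurd h hx1'
      · exact h
    have := hP 1 x (by
      simp only [zero_add, one_pow, zero_pow hepos]
      exact hsum)
    simp only [zero_add, one_mul] at this
    rcases mul_eq_zero.mp this with h | h
    · exact hx0 h
    · exact hx1' h
  · -- gcd = 1 → IsPAPN
    intro hgcd u v h
    simp only [zero_add, zero_pow hepos] at h ⊢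
    by_contra hc
    have hu : u ≠ 0 := fun h0 => hc (by rw [h0, zero_mul, zero_mul])
    have hv : v ≠ 0 := fun h0 => hc (by rw [h0, mul_zero, zero_mul])
    have huv : u + v ≠ 0 := fun h0 => hc (by rw [h0, mul_zero])
    have hid := my_ident d u v
    rw [h, mul_zero] at hid
    have heq : u ^ (2:ℕ) ^ d * v ^ 2 = u ^ 2 * v ^ (2:ℕ) ^ d := by
      have := hid.symm
      rw [add_eq_zero_iff_eq_neg] at this
      rw [this, CharTwo.neg_eq]
    set w : K := v / u with hwdef
    have hw0 : w ≠ 0 := div_ne_zero hv hu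
    have hw : w ^ (2:ℕ) ^ d = w ^ 2 := by
      have h2 : (2 : K) = 0 := by exact_mod_cast CharP.cast_eq_zero K 2
      rw [hwdef, div_pow, div_pow, div_eq_div_iff (pow_ne_zero _ hu) (pow_ne_zero _ hu)]
      linear_combination heq + (v ^ (2:ℕ) ^ d * u ^ 2 - v ^ 2 * u ^ (2:ℕ) ^ d) * h2
    have hwd : w ^ (2:ℕ) ^ (d - 1) = w := by
      apply my_pow_pow_inj 1
      simp only [pow_one]
      rw [← pow_mul, ← pow_succ]
      have : d - 1 + 1 = d := by omega
      rw [this, hw]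
    have hwn : w ^ (2:ℕ) ^ n = w := by
      rw [← hcard]
      exact FiniteField.pow_card w
    have hfix := my_fixed_gcd w (d - 1) n hwd hwn
    rw [hgcd, pow_one] at hfix
    -- w^2 = w, w ≠ 0 ⟹ w = 1
    have hw1 : w = 1 := by
      have : w * w = w * 1 := by
        rw [mul_one, ← sq, hfix]
      exact mul_left_cancel₀ hw0 this
    have : v = u := by
      rw [hwdef, div_eq_one_iff_eq hu] at hw1
      exact hw1
    rw [this, CharTwo.add_self_eq_zero] at huv
    exact huv rfl
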